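/- Entropy stability of the SBP CPR method on a periodic mesh (Theorem 1): consider N ≥ 1 elements indexed cyclically by e ∈ ℤ/Nℤ, where element e carries nodal vectors u^e_0, …, u^e_M ∈ ℝ^{p+1}, at the interface between elements e and e+1 a common numerical flux g^e ∈ ℝ^{M+1} is given, and the boundary flux vector of element e is f^{num,e}_k = (g^{e−1}_k, g^e_k) ∈ ℝ² (left boundary value, right boundary value). Write w^{e,L}_k = (R·u^e_k)_1 and w^{e,R}_k = (R·u^e_k)_2 for the boundary traces. Suppose every interface flux is entropy stable in the sense of Tadmor: for every e, Σ_{k=0}^{M} ( w^{e+1,L}_k − w^{e,R}_k )·g^e_k ≤ ψ(w^{e+1,L}) − ψ(w^{e,R}), with ψ(u) = (1/6)·Σ_{i,j,k} c_{ijk} u_i u_j u_k. Then the total discrete L² energy is nonincreasing: Σ_{e} Σ_{k=0}^{M} (u^e_k)ᵀ·P·RHS^e_k ≤ 0, where RHS^e_k is the semidiscrete right-hand side of element e formed with fluxes f^{num,e}. -/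

import Mathlib

open Matrix

lemma mulVec_sumX {m n ι : Type*} [Fintype n] (A : Matrix m n ℝ) (f : ι → n → ℝ) (s : Finset ι) :
    A.mulVec (∑ i ∈ s, f i) = ∑ i ∈ s, A.mulVec (f i) :=
  map_sum A.mulVecLin f s

lemma dotProduct_sumX {n ι : Type*} [Fintype n] (a : n → ℝ) (f : ι → n → ℝ) (s : Finset ι) :
    a ⬝ᵥ (∑ i ∈ s, f i) = ∑ i ∈ s, a ⬝ᵥ f i := by
  simp [dotProduct, Finset.mul_sum]
  exact Finset.sum_comm

lemma reorderX {M : ℕ} (F : Fin (M+1) → Fin (M+1) → Fin (M+1) → ℝ) :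
    ∑ k, ∑ i, ∑ j, F i j k = ∑ i, ∑ j, ∑ k, F i j k := by
  rw [Finset.sum_comm]
  exact Finset.sum_congr rfl fun i _ => Finset.sum_comm

lemma keyX (p M : ℕ)
    (c : Fin (M+1) → Fin (M+1) → Fin (M+1) → ℝ)
    (hsymm₁ : ∀ i j k, c i j k = c j i k)
    (hsymm₂ : ∀ i j k, c i j k = c i k j)
    (P D : Matrix (Fin (p+1)) (Fin (p+1)) ℝ)
    (hP : P.PosDef)
    (R : Matrix (Fin 2) (Fin (p+1)) ℝ)
    (B : Matrix (Fin 2) (Fin 2) ℝ)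
    (hB : B = Matrix.diagonal ![(-1 : ℝ), 1])
    (hSBP : P * D + Dᵀ * P = Rᵀ * B * R)
    (v : Fin (M+1) → Fin (p+1) → ℝ)
    (f : Fin (M+1) → Fin 2 → ℝ) :
    ∑ k, v k ⬝ᵥ P.mulVec (
      -((1/3 : ℝ) • ∑ i, ∑ j, c i j k •
          (D.mulVec (v i * v j)
            + (P⁻¹ * Matrix.diagonal (v j) * P * D).mulVec (v i)))
      - (P⁻¹ * Rᵀ * B).mulVec (f k - ∑ i, ∑ j, c i j k •
          ((1/3 : ℝ) • R.mulVec (v i * v j)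
            + (1/6 : ℝ) • (R.mulVec (v i) * R.mulVec (v j)))))
    = (∑ k, ((R *ᵥ v k) 0 * f k 0 - (R *ᵥ v k) 1 * f k 1))
      - 1/6 * (∑ i, ∑ j, ∑ k, c i j k * ((R *ᵥ v i) 0 * (R *ᵥ v j) 0 * (R *ᵥ v k) 0))
      + 1/6 * (∑ i, ∑ j, ∑ k, c i j k * ((R *ᵥ v i) 1 * (R *ᵥ v j) 1 * (R *ᵥ v k) 1)) := by
  haveI := hP.isUnit.invertible
  have hPsym : Pᵀ = P := by
    have h : P.IsSymm := by simpa using hP.1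
    exact h
  have csym : ∀ a j b, c a j b = c b j a := fun a j b => by
    rw [hsymm₁, hsymm₂, hsymm₁]
  have hM1 : ∀ j : Fin (M+1), P * (P⁻¹ * Matrix.diagonal (v j) * P * D)
      = Matrix.diagonal (v j) * (P * D) := by
    intro j
    rw [Matrix.mul_assoc P⁻¹, Matrix.mul_assoc P⁻¹, mul_inv_cancel_left_of_invertible,
      Matrix.mul_assoc]
  have hM2 : P * (P⁻¹ * Rᵀ * B) = Rᵀ * B := by
    rw [Matrix.mul_assoc P⁻¹, mul_inv_cancel_left_of_invertible]
  have hM3 : P * (P⁻¹ * Rᵀ * B * R) = Rᵀ * B * R := by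
    rw [Matrix.mul_assoc P⁻¹, Matrix.mul_assoc P⁻¹, mul_inv_cancel_left_of_invertible]
  have hdiag : ∀ (a b w : Fin (p+1) → ℝ),
      a ⬝ᵥ (Matrix.diagonal b * (P * D)) *ᵥ w = (b * a) ⬝ᵥ (P * D) *ᵥ w := by
    intro a b w
    rw [← mulVec_mulVec]
    simp only [dotProduct, mulVec_diagonal, Pi.mul_apply]
    exact Finset.sum_congr rfl (fun x _ => by ring)
  have hRT : ∀ (a : Fin (p+1) → ℝ) (x : Fin 2 → ℝ),
      a ⬝ᵥ (Rᵀ * B) *ᵥ x = (R *ᵥ a) ⬝ᵥ (B *ᵥ x) := by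
    intro a x
    rw [← mulVec_mulVec, dotProduct_mulVec, vecMul_transpose]
  have hRT3 : ∀ (a : Fin (p+1) → ℝ) (x : Fin (p+1) → ℝ),
      a ⬝ᵥ (Rᵀ * B * R) *ᵥ x = (R *ᵥ a) ⬝ᵥ (B * R) *ᵥ x := by
    intro a x
    rw [← mulVec_mulVec _ (Rᵀ * B) R, hRT, mulVec_mulVec]
  have hBsym : ∀ a b : Fin 2 → ℝ, a ⬝ᵥ B *ᵥ b = b ⬝ᵥ B *ᵥ a := by
    intro a b
    subst hB
    simp [dotProduct, Fin.sum_univ_two, mulVec_diagonal]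
    ring
  -- matrix-level simp normalization
  simp only [mulVec_sub, Matrix.mulVec_neg, mulVec_smul, mulVec_sumX, mulVec_add,
    mulVec_mulVec, hM1, hM2, hM3, dotProduct_sub, dotProduct_neg, dotProduct_add,
    dotProduct_smul, dotProduct_sumX, hdiag, hRT, hRT3, smul_eq_mul, mul_add]
  -- abbreviation lemmas for the Fin 2 dot products
  have hBdot : ∀ a b : Fin 2 → ℝ, a ⬝ᵥ B *ᵥ b = -(a 0 * b 0) + a 1 * b 1 := by
    intro a b
    rw [hB]
    simp [dotProduct, Fin.sum_univ_two, mulVec_diagonal]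
  have matid : ∀ (m w : Fin (p+1) → ℝ),
      w ⬝ᵥ (P * D) *ᵥ m + m ⬝ᵥ (P * D) *ᵥ w = (R *ᵥ w) ⬝ᵥ (B * R) *ᵥ m := by
    intro m w
    have h1 : w ⬝ᵥ (P * D) *ᵥ m = m ⬝ᵥ (Dᵀ * P) *ᵥ w := by
      rw [dotProduct_mulVec, ← mulVec_transpose, transpose_mul, hPsym, dotProduct_comm]
    rw [h1, ← dotProduct_add, ← add_mulVec, add_comm (Dᵀ * P) (P * D), hSBP, hRT3,
      ← mulVec_mulVec, hBsym, mulVec_mulVec]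
  have claim1 :
      (∑ k, ∑ i, ∑ j, c i j k * (v k ⬝ᵥ (P * D) *ᵥ (v i * v j)))
        + (∑ k, ∑ i, ∑ j, c i j k * ((v j * v k) ⬝ᵥ (P * D) *ᵥ v i))
      = ∑ k, ∑ i, ∑ j, c i j k * ((R *ᵥ v k) ⬝ᵥ (B * R) *ᵥ (v i * v j)) := by
    have swap2 : (∑ k, ∑ i, ∑ j, c i j k * ((v j * v k) ⬝ᵥ (P * D) *ᵥ v i))
        = ∑ k, ∑ i, ∑ j, c i j k * ((v i * v j) ⬝ᵥ (P * D) *ᵥ v k) := by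
      rw [Finset.sum_comm]
      refine Finset.sum_congr rfl fun a _ => Finset.sum_congr rfl fun b _ =>
        Finset.sum_congr rfl fun j _ => ?_
      rw [csym a j b, mul_comm (v j) (v b)]
    rw [swap2]
    simp only [← Finset.sum_add_distrib]
    refine Finset.sum_congr rfl fun k _ => Finset.sum_congr rfl fun i _ =>
      Finset.sum_congr rfl fun j _ => ?_
    rw [← mul_add, matid]
  have claim2 : (∑ k, ∑ i, ∑ j, c i j k * (1/3 * ((R *ᵥ v k) ⬝ᵥ (B * R) *ᵥ (v i * v j))))
      = 1/3 * ∑ k, ∑ i, ∑ j, c i j k * ((R *ᵥ v k) ⬝ᵥ (B * R) *ᵥ (v i * v j)) := by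
    simp only [Finset.mul_sum]
    refine Finset.sum_congr rfl fun k _ => Finset.sum_congr rfl fun i _ =>
      Finset.sum_congr rfl fun j _ => by ring
  have claim3 : (∑ k, ∑ i, ∑ j, c i j k * (1/6 * ((R *ᵥ v k) ⬝ᵥ B *ᵥ (R *ᵥ v i * R *ᵥ v j))))
      = 1/6 * (∑ i, ∑ j, ∑ k, c i j k * ((R *ᵥ v i) 1 * (R *ᵥ v j) 1 * (R *ᵥ v k) 1))
        - 1/6 * (∑ i, ∑ j, ∑ k, c i j k * ((R *ᵥ v i) 0 * (R *ᵥ v j) 0 * (R *ᵥ v k) 0)) := by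
    have e1 : (∑ k, ∑ i, ∑ j, c i j k * (1/6 * ((R *ᵥ v k) ⬝ᵥ B *ᵥ (R *ᵥ v i * R *ᵥ v j))))
        = ∑ k, ∑ i, ∑ j, (1/6 * (c i j k * ((R *ᵥ v i) 1 * (R *ᵥ v j) 1 * (R *ᵥ v k) 1))
            - 1/6 * (c i j k * ((R *ᵥ v i) 0 * (R *ᵥ v j) 0 * (R *ᵥ v k) 0))) := by
      refine Finset.sum_congr rfl fun k _ => Finset.sum_congr rfl fun i _ =>
        Finset.sum_congr rfl fun j _ => ?_
      rw [hBdot]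
      simp only [Pi.mul_apply]
      ring
    rw [e1]
    simp only [Finset.sum_sub_distrib, ← Finset.mul_sum]
    rw [reorderX (fun i j k => c i j k * ((R *ᵥ v i) 1 * (R *ᵥ v j) 1 * (R *ᵥ v k) 1)),
      reorderX (fun i j k => c i j k * ((R *ᵥ v i) 0 * (R *ᵥ v j) 0 * (R *ᵥ v k) 0))]
  have claim4 : (∑ k, (R *ᵥ v k) ⬝ᵥ B *ᵥ f k)
      = ∑ k, ((R *ᵥ v k) 1 * f k 1) - ∑ k, ((R *ᵥ v k) 0 * f k 0) := by
    rw [← Finset.sum_sub_distrib]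
    refine Finset.sum_congr rfl fun k _ => ?_
    rw [hBdot]
    ring
  -- distribute the outer sum
  simp only [Finset.sum_add_distrib, Finset.sum_sub_distrib, Finset.sum_neg_distrib,
    ← Finset.mul_sum]
  rw [claim1, claim2, claim3, claim4]
  ring


open Matrix in
/-- Entropy stability of the SBP CPR method on a periodic mesh (Theorem 1):
if every interface flux is entropy stable in the sense of Tadmor, then the total
discrete L² energy is nonincreasing. -/
theorem stmt_14 (p M N : ℕ) [NeZero N]
    (c : Fin (M+1) → Fin (M+1) → Fin (M+1) → ℝ)
    (hsymm₁ : ∀ i j k, c i j k = c j i k)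
    (hsymm₂ : ∀ i j k, c i j k = c i k j)
    (P D : Matrix (Fin (p+1)) (Fin (p+1)) ℝ)
    (hP : P.PosDef)
    (hD : D.mulVec (fun _ => 1) = 0)
    (R : Matrix (Fin 2) (Fin (p+1)) ℝ)
    (hR : R.mulVec (fun _ => 1) = fun _ => 1)
    (B : Matrix (Fin 2) (Fin 2) ℝ)
    (hB : B = Matrix.diagonal ![(-1 : ℝ), 1])
    (hSBP : P * D + Dᵀ * P = Rᵀ * B * R)
    (ψ : (Fin (M+1) → ℝ) → ℝ)
    (hψ : ∀ u, ψ u = (1/6) * ∑ i, ∑ j, ∑ k, c i j k * u i * u j * u k)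
    -- nodal coefficients on each element, interface fluxes, boundary flux vectors
    (u : ZMod N → Fin (M+1) → Fin (p+1) → ℝ)
    (g : ZMod N → Fin (M+1) → ℝ)
    (fnum : ZMod N → Fin (M+1) → Fin 2 → ℝ)
    (hfnum : ∀ e k, fnum e k = ![g (e-1) k, g e k])
    -- boundary traces
    (wL wR : ZMod N → Fin (M+1) → ℝ)
    (hwL : ∀ e k, wL e k = R.mulVec (u e k) 0)
    (hwR : ∀ e k, wR e k = R.mulVec (u e k) 1)
    -- every interface flux is entropy stable in the sense of Tadmor
    (hES : ∀ e, ∑ k, (wL (e+1) k - wR e k) * g e k ≤ ψ (wL (e+1)) - ψ (wR e))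
    -- semidiscrete right-hand sides
    (RHS : ZMod N → Fin (M+1) → Fin (p+1) → ℝ)
    (hRHS : ∀ e k, RHS e k =
      -((1/3 : ℝ) • ∑ i, ∑ j, c i j k •
          (D.mulVec (u e i * u e j)
            + (P⁻¹ * Matrix.diagonal (u e j) * P * D).mulVec (u e i)))
      - (P⁻¹ * Rᵀ * B).mulVec (fnum e k - ∑ i, ∑ j, c i j k •
          ((1/3 : ℝ) • R.mulVec (u e i * u e j)
            + (1/6 : ℝ) • (R.mulVec (u e i) * R.mulVec (u e j))))) :
    ∑ e : ZMod N, ∑ k, (u e k) ⬝ᵥ P.mulVec (RHS e k) ≤ 0 := by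
  have key : ∀ e : ZMod N, ∑ k, (u e k) ⬝ᵥ P.mulVec (RHS e k)
      = (∑ k, (wL e k * g (e-1) k - wR e k * g e k)) - ψ (wL e) + ψ (wR e) := by
    intro e
    have h := keyX p M c hsymm₁ hsymm₂ P D hP R B hB hSBP (u e) (fnum e)
    have hgoal : ∑ k, (u e k) ⬝ᵥ P.mulVec (RHS e k)
        = (∑ k, ((R *ᵥ u e k) 0 * fnum e k 0 - (R *ᵥ u e k) 1 * fnum e k 1))
          - 1/6 * (∑ i, ∑ j, ∑ k, c i j k * ((R *ᵥ u e i) 0 * (R *ᵥ u e j) 0 * (R *ᵥ u e k) 0))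
          + 1/6 * (∑ i, ∑ j, ∑ k, c i j k * ((R *ᵥ u e i) 1 * (R *ᵥ u e j) 1 * (R *ᵥ u e k) 1)) := by
      rw [← h]
      exact Finset.sum_congr rfl fun k _ => by rw [hRHS]
    rw [hgoal]
    have h1 : (∑ k, ((R *ᵥ u e k) 0 * fnum e k 0 - (R *ᵥ u e k) 1 * fnum e k 1))
        = ∑ k, (wL e k * g (e-1) k - wR e k * g e k) := by
      refine Finset.sum_congr rfl fun k _ => ?_
      rw [hwL, hwR, hfnum]
      simp
    have h2 : ψ (wL e)
        = 1/6 * (∑ i, ∑ j, ∑ k, c i j k * ((R *ᵥ u e i) 0 * (R *ᵥ u e j) 0 * (R *ᵥ u e k) 0)) := by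
      rw [hψ]
      rw [Finset.mul_sum, Finset.mul_sum]
      refine Finset.sum_congr rfl fun i _ => ?_
      rw [Finset.mul_sum, Finset.mul_sum]
      refine Finset.sum_congr rfl fun j _ => ?_
      rw [Finset.mul_sum, Finset.mul_sum]
      refine Finset.sum_congr rfl fun k _ => ?_
      rw [hwL, hwL, hwL]
      ring
    have h3 : ψ (wR e)
        = 1/6 * (∑ i, ∑ j, ∑ k, c i j k * ((R *ᵥ u e i) 1 * (R *ᵥ u e j) 1 * (R *ᵥ u e k) 1)) := by
      rw [hψ]
      rw [Finset.mul_sum, Finset.mul_sum]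
      refine Finset.sum_congr rfl fun i _ => ?_
      rw [Finset.mul_sum, Finset.mul_sum]
      refine Finset.sum_congr rfl fun j _ => ?_
      rw [Finset.mul_sum, Finset.mul_sum]
      refine Finset.sum_congr rfl fun k _ => ?_
      rw [hwR, hwR, hwR]
      ring
    rw [h1, ← h2, ← h3]
  have split : ∑ e : ZMod N, ∑ k, (u e k) ⬝ᵥ P.mulVec (RHS e k)
      = (∑ e : ZMod N, ((∑ k, wL e k * g (e-1) k) - ψ (wL e)))
        + ∑ e : ZMod N, (ψ (wR e) - ∑ k, wR e k * g e k) := by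
    rw [← Finset.sum_add_distrib]
    refine Finset.sum_congr rfl fun e _ => ?_
    rw [key e, Finset.sum_sub_distrib]
    ring
  have shift : (∑ e : ZMod N, ((∑ k, wL e k * g (e-1) k) - ψ (wL e)))
      = ∑ e : ZMod N, ((∑ k, wL (e+1) k * g e k) - ψ (wL (e+1))) := by
    refine (Fintype.sum_equiv (Equiv.addRight (1 : ZMod N))
      (fun x => (∑ k, wL (x+1) k * g x k) - ψ (wL (x+1)))
      (fun y => (∑ k, wL y k * g (y-1) k) - ψ (wL y)) ?_).symm
    intro x
    simp [Equiv.coe_addRight, add_sub_cancel_right]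
  rw [split, shift, ← Finset.sum_add_distrib]
  refine Finset.sum_nonpos fun e _ => ?_
  have hE := hES e
  have hsum : ∑ k, (wL (e+1) k - wR e k) * g e k
      = (∑ k, wL (e+1) k * g e k) - ∑ k, wR e k * g e k := by
    rw [← Finset.sum_sub_distrib]
    exact Finset.sum_congr rfl fun k _ => by ring
  rw [hsum] at hE
  linarith
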